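/- Let P(t) = Σ_{k=0}^{N} b_k·t^k ∈ K[t] be a nonzero polynomial. Then for every root of unity ε ∈ K one has ‖P(ε)‖ ≤ max_{0 ≤ k ≤ N} ‖b_k‖, and for all but finitely many roots of unity ε ∈ K of order coprime to p one has ‖P(ε)‖ = max_{0 ≤ k ≤ N} ‖b_k‖. Equivalently, the minimum over all roots of unity ε ∈ K of v_q(P(ε)) equals min_{0 ≤ k ≤ N} v_q(b_k). -/

import Mathlib

/-- The additive valuation on the algebraic closure of `ℚ_[p]` attached to an absolute
value `v`, normalised so that `q = p ^ d` has valuation `1`. -/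
noncomputable def vq (p d : ℕ) [Fact p.Prime] (v : AlgebraicClosure ℚ_[p] → ℝ)
    (x : AlgebraicClosure ℚ_[p]) : ℝ :=
  -Real.log (v x) / Real.log ((p : ℝ) ^ d)

/-- `ε` is a root of unity. -/
def IsRootOfUnity {K : Type*} [Monoid K] (ε : K) : Prop :=
  ∃ m : ℕ, 0 < m ∧ ε ^ m = 1

/-- `ε` is a root of unity of order coprime to `p`. -/
def IsPrimeToRootOfUnity (p : ℕ) {K : Type*} [Monoid K] (ε : K) : Prop :=
  ∃ m : ℕ, 0 < m ∧ ¬ p ∣ m ∧ ε ^ m = 1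

open Polynomial Finset

section General
variable {K : Type*} [Field K] {v : K → ℝ}
  (hmul : ∀ x y, v (x * y) = v x * v y)
  (hna : ∀ x y, v (x + y) ≤ max (v x) (v y))
  (h1 : v 1 = 1) (h0 : v 0 = 0) (hnn : ∀ x, 0 ≤ v x)

include hmul h1 hnn in
theorem vneg (x : K) : v (-x) = v x := by
  have hm1 : v (-1) * v (-1) = 1 := by rw [← hmul]; simpa using h1
  have : v (-1) = 1 := by
    rcases mul_self_eq_one_iff.1 hm1 with h | h
    · exact h
    · nlinarith [hnn (-1 : K)]
  calc v (-x) = v (-1 * x) := by ring_nf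
    _ = v x := by rw [hmul, this, one_mul]

include hna h0 in
theorem vsum_le {ι : Type*} (s : Finset ι) (hs : s.Nonempty) (f : ι → K) :
    v (∑ i ∈ s, f i) ≤ s.sup' hs fun i => v (f i) := by
  induction hs using Finset.Nonempty.cons_induction with
  | singleton i => simp
  | cons i s hi hs ih =>
      rw [Finset.sum_cons, Finset.sup'_cons (H := hs)]
      exact (hna _ _).trans (max_le_max le_rfl ih)

include hna h0 in
theorem vsum_le' {ι : Type*} (s : Finset ι) (f : ι → K) {c : ℝ} (hc : 0 ≤ c)
    (h : ∀ i ∈ s, v (f i) ≤ c) : v (∑ i ∈ s, f i) ≤ c := by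
  rcases s.eq_empty_or_nonempty with rfl | hs
  · simpa [h0] using hc
  · exact (vsum_le hna h0 s hs f).trans (Finset.sup'_le _ _ h)

include hmul hna h0 hnn in
theorem vcoeff_mul {Q R : K[X]} {a c : ℝ} (ha : 0 ≤ a) (hc : 0 ≤ c)
    (hQ : ∀ i, v (Q.coeff i) ≤ a) (hR : ∀ i, v (R.coeff i) ≤ c) :
    ∀ i, v ((Q * R).coeff i) ≤ a * c := by
  intro n
  rw [Polynomial.coeff_mul]
  refine vsum_le' hna h0 _ _ (mul_nonneg ha hc) fun ij _ => ?_
  rw [hmul]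
  exact mul_le_mul (hQ _) (hR _) (hnn _) ha

include hmul hna h1 h0 hnn in
theorem vcoeff_prod {ι : Type*} (s : Finset ι) (g : ι → K[X])
    (h : ∀ j ∈ s, ∀ i, v ((g j).coeff i) ≤ 1) :
    ∀ i, v ((∏ j ∈ s, g j).coeff i) ≤ 1 := by
  induction s using Finset.cons_induction with
  | empty => intro i; rcases eq_or_ne i 0 with rfl | hi
             · simp [h1]
             · simp [Polynomial.coeff_one, hi, h0]
  | cons j s hj ih =>
      rw [Finset.prod_cons]
      have := vcoeff_mul hmul hna h0 hnn (a := 1) (c := 1) zero_le_one zero_le_one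
        (h j (Finset.mem_cons_self j s)) (ih fun j' hj' => h j' (Finset.mem_cons_of_mem hj'))
      simpa using this

end General

section General2
variable {K : Type*} [Field K] {v : K → ℝ}
  (hmul : ∀ x y, v (x * y) = v x * v y)
  (hna : ∀ x y, v (x + y) ≤ max (v x) (v y))
  (h1 : v 1 = 1) (h0 : v 0 = 0) (hnn : ∀ x, 0 ≤ v x)

include hmul h1 in
theorem vinv {a : K} (ha : a ≠ 0) : v a * v a⁻¹ = 1 := by
  rw [← hmul, mul_inv_cancel₀ ha, h1]

include hmul h1 hnn in
theorem vpos {a : K} (ha : a ≠ 0) : 0 < v a := by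
  rcases (hnn a).lt_or_eq with h | h
  · exact h
  · have := vinv hmul h1 ha; rw [← h, zero_mul] at this; norm_num at this

include hmul hna h1 h0 hnn in
theorem vcoeff_basisDivisor {x y : K} (hy : v y ≤ 1) (hxy : v (x - y) = 1) :
    ∀ i, v ((Lagrange.basisDivisor x y).coeff i) ≤ 1 := by
  have hx0 : x - y ≠ 0 := fun h => by rw [h, h0] at hxy; norm_num at hxy
  have hinv : v (x - y)⁻¹ = 1 := by
    have := vinv hmul h1 hx0; rw [hxy, one_mul] at this; exact this
  intro i
  unfold Lagrange.basisDivisor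
  have := vcoeff_mul hmul hna h0 hnn (a := 1) (c := 1) zero_le_one zero_le_one
    (Q := C (x - y)⁻¹) (R := X - C y) ?_ ?_ i
  · simpa using this
  · intro i
    rcases eq_or_ne i 0 with rfl | hi
    · simpa using hinv.le
    · simp [Polynomial.coeff_C, hi, h0]
  · intro i
    rcases eq_or_ne i 0 with rfl | hi
    · simpa [vneg hmul h1 hnn y] using hy
    · rcases eq_or_ne i 1 with rfl | hi1
      · simpa [h1, Polynomial.coeff_X] using le_of_eq h1
      · simp [Polynomial.coeff_X, Polynomial.coeff_C, hi, Ne.symm hi1, h0]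

include hmul hna h1 h0 hnn in
theorem vcoeff_le_sup_eval (s : Finset K) (hs : s.Nonempty) (P : K[X])
    (hdeg : P.degree < s.card)
    (hone : ∀ y ∈ s, v y ≤ 1) (hsep : ∀ x ∈ s, ∀ y ∈ s, x ≠ y → v (x - y) = 1) :
    ∀ k, v (P.coeff k) ≤ s.sup' hs fun x => v (P.eval x) := by
  classical
  intro k
  have hinj : Set.InjOn (id : K → K) s := Function.injective_id.injOn
  have hrep := Lagrange.eq_interpolate (v := id) hinj hdeg
  have hbasis : ∀ x ∈ s, ∀ i, v ((Lagrange.basis s id x).coeff i) ≤ 1 := by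
    intro x hx i
    refine vcoeff_prod hmul hna h1 h0 hnn _ _ (fun j hj i => ?_) i
    have hjs := Finset.mem_of_mem_erase hj
    exact vcoeff_basisDivisor hmul hna h1 h0 hnn (hone j hjs)
      (hsep x hx j hjs (Finset.ne_of_mem_erase hj).symm) i
  have hsup0 : 0 ≤ s.sup' hs fun x => v (P.eval x) := by
    obtain ⟨x, hx⟩ := hs
    exact le_trans (hnn _) (Finset.le_sup' (fun x => v (P.eval x)) hx)
  calc v (P.coeff k)
      = v ((Lagrange.interpolate s id fun i => P.eval (id i)).coeff k) := by rw [← hrep]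
    _ ≤ _ := by
        rw [Lagrange.interpolate_apply, Polynomial.finset_sum_coeff]
        refine vsum_le' hna h0 _ _ hsup0 fun x hx => ?_
        rw [Polynomial.coeff_C_mul, hmul]
        calc v (P.eval x) * v ((Lagrange.basis s id x).coeff k)
            ≤ v (P.eval x) * 1 := by
              exact mul_le_mul_of_nonneg_left (hbasis x hx k) (hnn _)
          _ ≤ _ := by rw [mul_one]; exact Finset.le_sup' (fun x => v (P.eval x)) hx

end General2



section Padic
variable {p : ℕ} [Fact p.Prime]

variable {v : AlgebraicClosure ℚ_[p] → ℝ}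
  (hmul : ∀ x y, v (x * y) = v x * v y)
  (hna : ∀ x y, v (x + y) ≤ max (v x) (v y))
  (hext : ∀ x : ℚ_[p], v (algebraMap ℚ_[p] (AlgebraicClosure ℚ_[p]) x) = ‖x‖)

include hext in
theorem v_one : v 1 = 1 := by
  have := hext 1; simpa using this

include hmul hext in
theorem v_zero : v 0 = 0 := by
  have hp : v (algebraMap ℚ_[p] (AlgebraicClosure ℚ_[p]) (p : ℚ_[p])) = (p : ℝ)⁻¹ := by
    rw [hext, Padic.norm_p]
  have h := hmul (algebraMap ℚ_[p] (AlgebraicClosure ℚ_[p]) (p : ℚ_[p])) 0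
  rw [mul_zero, hp] at h
  have hp2 : (p : ℝ)⁻¹ < 1 := by
    have h2 := (Fact.out : p.Prime).one_lt
    have : (1 : ℝ) < p := by exact_mod_cast h2
    rw [inv_lt_one_iff₀]; right; exact this
  have h3 : v 0 * (1 - (p : ℝ)⁻¹) = 0 := by linear_combination h
  rcases mul_eq_zero.1 h3 with h4 | h4
  · exact h4
  · linarith

include hmul in
theorem v_nonneg : ∀ x : AlgebraicClosure ℚ_[p], 0 ≤ v x := by
  intro x
  obtain ⟨y, rfl⟩ := IsAlgClosed.exists_pow_nat_eq x (n := 2) zero_lt_two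
  rw [pow_two, hmul]
  exact mul_self_nonneg _

include hmul hext in
theorem v_pow (x : AlgebraicClosure ℚ_[p]) (m : ℕ) : v (x ^ m) = v x ^ m := by
  induction m with
  | zero => simp [pow_zero, v_one hext]
  | succ n ih => rw [pow_succ, pow_succ, hmul, ih]

include hmul hext in
theorem v_rou {ε : AlgebraicClosure ℚ_[p]} (h : IsRootOfUnity ε) : v ε = 1 := by
  obtain ⟨m, hm, hεm⟩ := h
  have hpow : v ε ^ m = 1 := by rw [← v_pow hmul hext, hεm, v_one hext]
  have hnn := v_nonneg hmul ε
  rcases lt_trichotomy (v ε) 1 with h | h | h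
  · have := pow_lt_one₀ hnn h hm.ne'
    rw [hpow] at this; norm_num at this
  · exact h
  · have := one_lt_pow₀ h hm.ne'
    rw [hpow] at this; norm_num at this

include hext in
theorem v_natCast_le (n : ℕ) : v (n : AlgebraicClosure ℚ_[p]) ≤ 1 := by
  have h2 : algebraMap ℚ_[p] (AlgebraicClosure ℚ_[p]) (n : ℚ_[p])
      = (n : AlgebraicClosure ℚ_[p]) := map_natCast _ n
  rw [← h2, hext]
  exact_mod_cast Padic.norm_int_le_one (n : ℤ)

include hext in
theorem v_natCast_eq {n : ℕ} (hn : ¬ p ∣ n) : v (n : AlgebraicClosure ℚ_[p]) = 1 := by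
  have h2 : algebraMap ℚ_[p] (AlgebraicClosure ℚ_[p]) (n : ℚ_[p])
      = (n : AlgebraicClosure ℚ_[p]) := map_natCast _ n
  rw [← h2, hext]
  have hlt : ¬ ‖((n : ℤ) : ℚ_[p])‖ < 1 := by
    rw [Padic.norm_intCast_lt_one_iff]
    exact_mod_cast hn
  have hle : ‖((n : ℤ) : ℚ_[p])‖ ≤ 1 := Padic.norm_int_le_one _
  push_cast at hlt hle ⊢
  linarith [lt_or_eq_of_le hle |>.resolve_left hlt]

include hmul hna hext in
theorem v_zeta_sub_one {ζ : AlgebraicClosure ℚ_[p]} (hζ : ζ ≠ 1) {m : ℕ}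
    (hpm : ¬ p ∣ m) (hζm : ζ ^ m = 1) : v (ζ - 1) = 1 := by
  have h0 := v_zero hmul hext
  have h1 := v_one hext
  have hnn := v_nonneg hmul
  have hm0 : m ≠ 0 := by rintro rfl; exact hpm (dvd_zero p)
  have hm1 : m ≠ 1 := by rintro rfl; rw [pow_one] at hζm; exact hζ hζm
  obtain ⟨n, rfl⟩ : ∃ n, m = n + 2 := ⟨m - 2, by omega⟩
  set α := ζ - 1 with hαdef
  have hα0 : α ≠ 0 := sub_ne_zero.2 hζ
  have hαpos : 0 < v α := vpos hmul h1 hnn hα0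
  have hαle : v α ≤ 1 := by
    have hζ1 : v ζ = 1 := v_rou hmul hext ⟨n + 2, by omega, hζm⟩
    have hneg : v (-1 : AlgebraicClosure ℚ_[p]) = v 1 := vneg hmul h1 hnn 1
    calc v α = v (ζ + -1) := by rw [hαdef]; ring_nf
      _ ≤ max (v ζ) (v (-1)) := hna _ _
      _ ≤ 1 := by rw [hζ1, hneg, h1]; simp
  have hb : (α + 1) ^ (n + 2) = 1 := by
    rw [hαdef, sub_add_cancel]; exact hζm
  rw [add_pow] at hb
  simp only [one_pow, mul_one] at hb
  rw [Finset.sum_range_succ'] at hb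
  rw [Finset.sum_range_succ'] at hb
  simp only [pow_zero, pow_one, Nat.choose_zero_right, Nat.choose_one_right,
    Nat.cast_one, one_mul, Nat.cast_ofNat, Nat.cast_add] at hb
  rw [Nat.choose_one_right] at hb
  have hkey : ((n + 2 : ℕ) : AlgebraicClosure ℚ_[p]) * α
      = -∑ k ∈ Finset.range (n + 1), α ^ (k + 1 + 1) * ((n + 2).choose (k + 1 + 1) :
          AlgebraicClosure ℚ_[p]) := by
    push_cast
    push_cast at hb
    linear_combination hb
  have hvm : v ((n + 2 : ℕ) : AlgebraicClosure ℚ_[p]) = 1 := v_natCast_eq hext hpm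
  have hL : v (((n + 2 : ℕ) : AlgebraicClosure ℚ_[p]) * α) = v α := by
    rw [hmul, hvm, one_mul]
  have hR : v (-∑ k ∈ Finset.range (n + 1), α ^ (k + 1 + 1) * ((n + 2).choose (k + 1 + 1) :
      AlgebraicClosure ℚ_[p])) ≤ v α ^ 2 := by
    rw [show ∀ x : AlgebraicClosure ℚ_[p], v (-x) = v x from fun x => vneg hmul h1 hnn x]
    refine vsum_le' hna h0 _ _ (by positivity) fun k _ => ?_
    rw [hmul, v_pow hmul hext]
    calc v α ^ (k + 1 + 1) * v (((n + 2).choose (k + 1 + 1) : ℕ) : AlgebraicClosure ℚ_[p])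
        ≤ v α ^ (k + 1 + 1) * 1 := by
          exact mul_le_mul_of_nonneg_left (v_natCast_le hext _) (by positivity)
      _ = v α ^ (k + 1 + 1) := mul_one _
      _ ≤ v α ^ 2 := pow_le_pow_of_le_one (hnn _) hαle (by omega)
  have hfin : v α ≤ v α ^ 2 := by
    calc v α = v (((n + 2 : ℕ) : AlgebraicClosure ℚ_[p]) * α) := hL.symm
      _ = _ := by rw [hkey]
      _ ≤ v α ^ 2 := hR
  have : 1 ≤ v α := by nlinarith
  linarith

include hmul hna hext in
theorem v_sub_rou {ε ε' : AlgebraicClosure ℚ_[p]} (hne : ε ≠ ε')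
    (hε : IsPrimeToRootOfUnity p ε) (hε' : IsPrimeToRootOfUnity p ε') :
    v (ε - ε') = 1 := by
  obtain ⟨m, hm, hpm, hεm⟩ := hε
  obtain ⟨m', hm', hpm', hεm'⟩ := hε'
  have hε'0 : ε' ≠ 0 := by
    rintro rfl
    rw [zero_pow hm'.ne'] at hεm'
    exact zero_ne_one hεm'
  set ζ := ε * ε'⁻¹ with hζdef
  have hζ1 : ζ ≠ 1 := by
    intro h
    apply hne
    rw [hζdef, mul_inv_eq_one₀ hε'0] at h
    exact h
  have hζm : ζ ^ (m * m') = 1 := by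
    rw [hζdef, mul_pow, inv_pow, pow_mul ε m m', hεm, one_pow, one_mul,
      mul_comm m m', pow_mul, hεm', one_pow, inv_one]
  have hpmm : ¬ p ∣ m * m' := by
    intro h
    rcases ((Fact.out : p.Prime).dvd_mul).1 h with h | h
    · exact hpm h
    · exact hpm' h
  have hζsub : v (ζ - 1) = 1 := v_zeta_sub_one hmul hna hext hζ1 hpmm hζm
  have hfact : ε - ε' = (ζ - 1) * ε' := by
    rw [hζdef]; field_simp
  rw [hfact, hmul, hζsub, one_mul]
  exact v_rou hmul hext ⟨m', hm', hεm'⟩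

end Padic

section Padic2
variable {p : ℕ} [Fact p.Prime]

theorem infinite_ptrou :
    {ε : AlgebraicClosure ℚ_[p] | IsPrimeToRootOfUnity p ε}.Infinite := by
  have hf : ∀ k : ℕ, ∃ ζ : AlgebraicClosure ℚ_[p], IsPrimitiveRoot ζ ((p + 1) ^ k) := by
    intro k
    haveI : NeZero ((((p + 1) ^ k : ℕ)) : AlgebraicClosure ℚ_[p]) :=
      ⟨by exact_mod_cast (pow_pos (Nat.succ_pos p) k).ne'⟩
    exact HasEnoughRootsOfUnity.exists_primitiveRoot _ _
  choose f hfp using hf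
  apply Set.infinite_of_injective_forall_mem (f := f)
  · intro k l hkl
    have hk := (hfp k).eq_orderOf
    have hl := (hfp l).eq_orderOf
    rw [hkl] at hk
    have : (p + 1) ^ k = (p + 1) ^ l := by rw [hk, hl]
    exact Nat.pow_right_injective (by have := (Fact.out : p.Prime).two_le; omega) this
  · intro k
    refine ⟨(p + 1) ^ k, pow_pos (Nat.succ_pos p) k, ?_, (hfp k).pow_eq_one⟩
    intro hdvd
    have h1 : p ∣ p + 1 := (Fact.out : p.Prime).dvd_of_dvd_pow hdvd
    have h2 : p ∣ 1 := (Nat.dvd_add_right (dvd_refl p)).1 h1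
    have := Nat.le_of_dvd one_pos h2
    have := (Fact.out : p.Prime).two_le
    omega

end Padic2

theorem padic_norm_of_polynomial_at_roots_of_unity_eq_sup_of_coefficients
    (p : ℕ) [Fact p.Prime] (d : ℕ) (hd : 0 < d)
    (v : AlgebraicClosure ℚ_[p] → ℝ)
    (hmul : ∀ x y, v (x * y) = v x * v y)
    (hna : ∀ x y, v (x + y) ≤ max (v x) (v y))
    (hext : ∀ x : ℚ_[p], v (algebraMap ℚ_[p] (AlgebraicClosure ℚ_[p]) x) = ‖x‖)
    (N : ℕ) (b : ℕ → AlgebraicClosure ℚ_[p])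
    (P : Polynomial (AlgebraicClosure ℚ_[p]))
    (hPdef : P = ∑ k ∈ Finset.range (N + 1), Polynomial.C (b k) * Polynomial.X ^ k)
    (hP : P ≠ 0) :
    (∀ ε : AlgebraicClosure ℚ_[p], IsRootOfUnity ε →
        v (P.eval ε) ≤ (Finset.range (N + 1)).sup' Finset.nonempty_range_add_one
          fun k => v (b k)) ∧
    {ε : AlgebraicClosure ℚ_[p] | IsPrimeToRootOfUnity p ε ∧
        v (P.eval ε) ≠ (Finset.range (N + 1)).sup' Finset.nonempty_range_add_one
          fun k => v (b k)}.Finite ∧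
    -- equivalently: the minimum over all roots of unity `ε` of `v_q(P(ε))` equals
    -- `min_{0 ≤ k ≤ N} v_q(b_k)` (the minimum being over the nonzero coefficients,
    -- since `v_q(0) = +∞`)
    ∃ m : ℝ,
      IsLeast {r : ℝ | ∃ ε : AlgebraicClosure ℚ_[p], IsRootOfUnity ε ∧
        P.eval ε ≠ 0 ∧ r = vq p d v (P.eval ε)} m ∧
      IsLeast {r : ℝ | ∃ k : ℕ, k ≤ N ∧ b k ≠ 0 ∧ r = vq p d v (b k)} m := by
  have h0 := v_zero hmul hext
  have h1 := v_one hext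
  have hnn := v_nonneg hmul
  set M : ℝ := (Finset.range (N + 1)).sup' Finset.nonempty_range_add_one fun k => v (b k)
    with hMdef
  have hM0 : 0 ≤ M := le_trans (hnn (b 0)) (Finset.le_sup' (fun k => v (b k)) (Finset.mem_range.2 (by omega)))
  -- coefficients of P
  have hcoeff : ∀ k ∈ Finset.range (N + 1), P.coeff k = b k := by
    intro k hk
    rw [hPdef, Polynomial.finset_sum_coeff]
    simp only [Polynomial.coeff_C_mul, Polynomial.coeff_X_pow]
    rw [Finset.sum_eq_single k]
    · simp
    · intro j _ hj; simp [Ne.symm hj]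
    · intro h; exact absurd hk h
  -- degree bound
  have hdeg : P.degree < ((N + 1 : ℕ) : WithBot ℕ) := by
    rw [hPdef]
    apply lt_of_le_of_lt (Polynomial.degree_sum_le _ _)
    rw [Finset.sup_lt_iff (by exact_mod_cast WithBot.bot_lt_coe (N + 1))]
    intro k hk
    refine lt_of_le_of_lt (Polynomial.degree_C_mul_X_pow_le _ _) ?_
    exact_mod_cast Finset.mem_range.1 hk
  -- part 1 : upper bound at any root of unity
  have part1 : ∀ ε : AlgebraicClosure ℚ_[p], IsRootOfUnity ε → v (P.eval ε) ≤ M := by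
    intro ε hε
    have hvε : v ε = 1 := v_rou hmul hext hε
    rw [hPdef, Polynomial.eval_finset_sum]
    refine vsum_le' hna h0 _ _ hM0 fun k hk => ?_
    simp only [Polynomial.eval_mul, Polynomial.eval_C, Polynomial.eval_pow,
      Polynomial.eval_X]
    rw [hmul, v_pow hmul hext, hvε, one_pow, mul_one]
    exact Finset.le_sup' (fun k => v (b k)) hk
  have part2 : {ε : AlgebraicClosure ℚ_[p] | IsPrimeToRootOfUnity p ε ∧
      v (P.eval ε) ≠ M}.Finite := by
    by_contra hinf
    obtain ⟨s, hsub, hcard⟩ := Set.Infinite.exists_subset_card_eq hinf (N + 1)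
    have hsne : s.Nonempty := Finset.card_pos.1 (by omega)
    have hslt : ∀ x ∈ s, v (P.eval x) < M := by
      intro x hx
      have hxE := hsub hx
      obtain ⟨hx1, hx2⟩ := hxE
      obtain ⟨m, hm, hpm, hxm⟩ := hx1
      exact lt_of_le_of_ne (part1 x ⟨m, hm, hxm⟩) hx2
    have hone : ∀ y ∈ s, v y ≤ 1 := by
      intro y hy
      obtain ⟨m, hm, hpm, hym⟩ := (hsub hy).1
      exact le_of_eq (v_rou hmul hext ⟨m, hm, hym⟩)
    have hsep : ∀ x ∈ s, ∀ y ∈ s, x ≠ y → v (x - y) = 1 := by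
      intro x hx y hy hxy
      exact v_sub_rou hmul hna hext hxy (hsub hx).1 (hsub hy).1
    have hbound := vcoeff_le_sup_eval hmul hna h1 h0 hnn s hsne P
      (by rw [hcard]; exact hdeg) hone hsep
    obtain ⟨k₀, hk₀, hk₀eq⟩ := Finset.exists_mem_eq_sup' (Finset.nonempty_range_add_one (n := N))
      fun k => v (b k)
    have hlt : s.sup' hsne (fun x => v (P.eval x)) < M :=
      (Finset.sup'_lt_iff hsne).2 hslt
    have : M ≤ s.sup' hsne fun x => v (P.eval x) := by
      have hMk : M = v (b k₀) := by rw [hMdef]; exact hk₀eq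
      rw [hMk, ← hcoeff k₀ hk₀]
      exact hbound k₀
    linarith
  refine ⟨part1, part2, ?_⟩
  -- part 3
  have hbne : ∃ k ∈ Finset.range (N + 1), b k ≠ 0 := by
    by_contra h
    push_neg at h
    apply hP
    rw [hPdef]
    refine Finset.sum_eq_zero fun k hk => ?_
    rw [h k hk, map_zero, zero_mul]
  obtain ⟨k₁, hk₁, hbk₁⟩ := hbne
  have hMpos : 0 < M :=
    lt_of_lt_of_le (vpos hmul h1 hnn hbk₁) (Finset.le_sup' (fun k => v (b k)) hk₁)
  obtain ⟨ε₀, hε₀⟩ := ((infinite_ptrou (p := p)).diff part2).nonempty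
  have hv₀ : v (P.eval ε₀) = M := by
    by_contra hne
    exact hε₀.2 ⟨hε₀.1, hne⟩
  have hrou₀ : IsRootOfUnity ε₀ := by
    obtain ⟨m, hm, _, hεm⟩ := hε₀.1; exact ⟨m, hm, hεm⟩
  have hPε₀ : P.eval ε₀ ≠ 0 := by
    intro h; rw [h, h0] at hv₀; linarith
  have hq1 : (1 : ℝ) < (p : ℝ) ^ d := by
    have h2 : (2 : ℝ) ≤ p := by exact_mod_cast (Fact.out : p.Prime).two_le
    calc (1 : ℝ) < 2 ^ d := one_lt_pow₀ (by norm_num) hd.ne'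
      _ ≤ (p : ℝ) ^ d := pow_le_pow_left₀ (by norm_num) h2 d
  have hlogq : 0 < Real.log ((p : ℝ) ^ d) := Real.log_pos hq1
  have key : ∀ x : ℝ, 0 < x → x ≤ M →
      -Real.log M / Real.log ((p : ℝ) ^ d) ≤ -Real.log x / Real.log ((p : ℝ) ^ d) := by
    intro x hx hxM
    have hlog : Real.log x ≤ Real.log M := Real.log_le_log hx hxM
    have : -Real.log M ≤ -Real.log x := by linarith
    exact div_le_div_of_nonneg_right this hlogq.le
  refine ⟨-Real.log M / Real.log ((p : ℝ) ^ d), ⟨⟨ε₀, hrou₀, hPε₀, ?_⟩, ?_⟩, ?_, ?_⟩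
  · rw [vq, hv₀]
  · rintro r ⟨ε, hεrou, hεne, rfl⟩
    rw [vq]
    exact key _ (vpos hmul h1 hnn hεne) (part1 ε hεrou)
  · obtain ⟨k₀, hk₀, hk₀eq⟩ := Finset.exists_mem_eq_sup' (Finset.nonempty_range_add_one (n := N))
      fun k => v (b k)
    have hMk : v (b k₀) = M := by rw [hMdef]; exact hk₀eq.symm
    refine ⟨k₀, by have := Finset.mem_range.1 hk₀; omega, ?_, ?_⟩
    · intro h; rw [h, h0] at hMk; linarith
    · rw [vq, hMk]
  · rintro r ⟨k, hkN, hbk, rfl⟩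
    rw [vq]
    exact key _ (vpos hmul h1 hnn hbk)
      (Finset.le_sup' (fun k => v (b k)) (Finset.mem_range.2 (by omega)))
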